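/- (ODE regularity at a degenerate endpoint.) Let n ∈ ℕ₀, let u ∈ C¹((0,1)) ∩ C⁰([0,1)) and h ∈ Cⁿ([0,1)) satisfy (x·u(x))' = x·h(x) for all x ∈ (0,1). Then u extends to a function of class C^{n+1}([0,1)). -/

import Mathlib

open Real

section odeAuxSection

open MeasureTheory intervalIntegral Set Filter Topology

noncomputable def pker (k : ℕ) (g : ℝ → ℝ) (x : ℝ) : ℝ :=
  if x = 0 then g 0 / (k + 1) else (∫ t in (0:ℝ)..x, t ^ k * g t) / x ^ (k + 1)

namespace odeAux

lemma Icc_sub {x : ℝ} (hx : x ∈ Set.Ico (0:ℝ) 1) : Set.Icc (0:ℝ) x ⊆ Set.Ico (0:ℝ) 1 :=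
  fun t ht => ⟨ht.1, lt_of_le_of_lt ht.2 hx.2⟩

lemma intg {g : ℝ → ℝ} (hg : ContinuousOn g (Set.Ico (0:ℝ) 1)) {x : ℝ}
    (hx : x ∈ Set.Ico (0:ℝ) 1) (k : ℕ) :
    IntervalIntegrable (fun t => t ^ k * g t) volume 0 x := by
  apply ContinuousOn.intervalIntegrable
  rw [Set.uIcc_of_le hx.1]
  exact ((continuous_pow k).continuousOn).mul (hg.mono (Icc_sub hx))

lemma pker_pos (k : ℕ) (g : ℝ → ℝ) {x : ℝ} (hx : x ≠ 0) :
    pker k g x = (∫ t in (0:ℝ)..x, t ^ k * g t) / x ^ (k + 1) := if_neg hx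

lemma pker_zero (k : ℕ) (g : ℝ → ℝ) : pker k g 0 = g 0 / (k + 1) := if_pos rfl

lemma integral_bound {f : ℝ → ℝ} {m : ℕ} {x C : ℝ} (hx0 : 0 < x)
    (hf : IntervalIntegrable f volume 0 x)
    (hb : ∀ t ∈ Set.Ioc (0:ℝ) x, |f t| ≤ C * t ^ m) :
    |∫ t in (0:ℝ)..x, f t| ≤ C * x ^ (m + 1) / (m + 1) := by
  have hC : 0 ≤ C := by
    have := hb x ⟨hx0, le_rfl⟩
    nlinarith [abs_nonneg (f x), pow_pos hx0 m]
  have hbd : IntervalIntegrable (fun t => C * t ^ m) volume 0 x :=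
    (Continuous.intervalIntegrable (by continuity) 0 x)
  have h1 : |∫ t in (0:ℝ)..x, f t| ≤ |∫ t in (0:ℝ)..x, C * t ^ m| := by
    rw [← Real.norm_eq_abs (∫ t in (0:ℝ)..x, f t)]
    apply intervalIntegral.norm_integral_le_abs_of_norm_le _ hbd
    rw [Set.uIoc_of_le hx0.le]
    exact MeasureTheory.ae_restrict_of_forall_mem measurableSet_Ioc
      (fun t ht => by simpa using hb t ht)
  have h2 : ∫ t in (0:ℝ)..x, C * t ^ m = C * x ^ (m + 1) / (m + 1) := by
    rw [intervalIntegral.integral_const_mul, integral_pow]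
    ring
  calc |∫ t in (0:ℝ)..x, f t| ≤ |∫ t in (0:ℝ)..x, C * t ^ m| := h1
    _ = C * x ^ (m + 1) / (m + 1) := by
        rw [h2, abs_of_nonneg]
        positivity

end odeAux

namespace odeAux

lemma integrable_aux {g : ℝ → ℝ} (hg : ContinuousOn g (Set.Ico (0:ℝ) 1)) {x : ℝ}
    (hx : x ∈ Set.Ico (0:ℝ) 1) (k : ℕ) (c d : ℝ) :
    IntervalIntegrable (fun t => t ^ k * (g t - c - d * t)) volume 0 x := by
  apply ContinuousOn.intervalIntegrable
  rw [Set.uIcc_of_le hx.1]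
  exact ((continuous_pow k).continuousOn).mul
    (((hg.mono (Icc_sub hx)).sub continuousOn_const).sub (by fun_prop))

lemma pker_sub {g : ℝ → ℝ} (hg : ContinuousOn g (Set.Ico (0:ℝ) 1)) {x : ℝ}
    (hx : x ∈ Set.Ico (0:ℝ) 1) (hx0 : 0 < x) (k : ℕ) (c : ℝ) :
    pker k g x - c / (k + 1) = (∫ t in (0:ℝ)..x, t ^ k * (g t - c)) / x ^ (k + 1) := by
  have hxk : (x : ℝ) ^ (k+1) ≠ 0 := pow_ne_zero _ hx0.ne'
  have hk1 : ((k : ℝ) + 1) ≠ 0 := by positivity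
  have h1 : (∫ t in (0:ℝ)..x, t ^ k * (g t - c))
      = (∫ t in (0:ℝ)..x, t ^ k * g t) - c * (x ^ (k+1) / (k+1)) := by
    have heq : (fun t => t ^ k * (g t - c)) = fun t => t ^ k * g t - c * t ^ k := by
      funext t; ring
    rw [heq, intervalIntegral.integral_sub (intg hg hx k)
      ((Continuous.intervalIntegrable (by continuity) 0 x)),
      intervalIntegral.integral_const_mul, integral_pow]
    ring
  rw [pker_pos k g hx0.ne', h1]
  field_simp

lemma pker_tendsto_zero {k : ℕ} {g : ℝ → ℝ} (hg : ContinuousOn g (Set.Ico (0:ℝ) 1)) :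
    Tendsto (pker k g) (𝓝[Set.Ico (0:ℝ) 1] 0) (𝓝 (pker k g 0)) := by
  rw [Metric.tendsto_nhdsWithin_nhds]
  intro ε hε
  have hg0 : ContinuousWithinAt g (Set.Ico (0:ℝ) 1) 0 := hg 0 ⟨le_rfl, one_pos⟩
  rw [Metric.continuousWithinAt_iff] at hg0
  obtain ⟨δ, hδ, hδ'⟩ := hg0 (ε/2) (by positivity)
  refine ⟨δ, hδ, ?_⟩
  intro x hx hxd
  rcases eq_or_ne x 0 with rfl | hx0
  · simpa using hε
  have hx0' : 0 < x := lt_of_le_of_ne hx.1 (Ne.symm hx0)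
  have hxδ : x < δ := by
    rw [Real.dist_eq, sub_zero, abs_of_nonneg hx.1] at hxd; exact hxd
  rw [Real.dist_eq, pker_zero, pker_sub hg hx hx0' k (g 0)]
  have hb : ∀ t ∈ Set.Ioc (0:ℝ) x, |t ^ k * (g t - g 0)| ≤ (ε/2) * t ^ k := by
    intro t ht
    have htI : t ∈ Set.Ico (0:ℝ) 1 := ⟨ht.1.le, lt_of_le_of_lt ht.2 hx.2⟩
    have htd : dist t 0 < δ := by
      rw [Real.dist_eq, sub_zero, abs_of_nonneg ht.1.le]; exact lt_of_le_of_lt ht.2 hxδ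
    have := (hδ' htI htd).le
    rw [Real.dist_eq] at this
    rw [abs_mul, abs_of_nonneg (pow_nonneg ht.1.le k)]
    calc t ^ k * |g t - g 0| ≤ t ^ k * (ε/2) := by
          apply mul_le_mul_of_nonneg_left this (pow_nonneg ht.1.le k)
      _ = (ε/2) * t ^ k := by ring
  have hint : IntervalIntegrable (fun t => t ^ k * (g t - g 0)) volume 0 x := by
    simpa using integrable_aux hg hx k (g 0) 0
  have hbd := integral_bound hx0' hint hb
  have hxk : (0:ℝ) < x ^ (k+1) := pow_pos hx0' _
  rw [abs_div, abs_of_pos hxk]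
  calc |∫ t in (0:ℝ)..x, t ^ k * (g t - g 0)| / x ^ (k+1)
      ≤ (ε/2 * x ^ (k+1) / (k+1)) / x ^ (k+1) := by
        apply div_le_div_of_nonneg_right hbd hxk.le |>.trans_eq rfl
      _ = (ε/2) / (k+1) := by field_simp
      _ ≤ ε/2 := by
        apply div_le_self (by positivity)
        have : (0:ℝ) ≤ (k:ℝ) := Nat.cast_nonneg k
        linarith
      _ < ε := by linarith

end odeAux

namespace odeAux

lemma pker_hasDerivWithinAt_zero {k : ℕ} {g : ℝ → ℝ}
    (hg : ContinuousOn g (Set.Ico (0:ℝ) 1)) {a : ℝ}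
    (hd : HasDerivWithinAt g a (Set.Ico (0:ℝ) 1) 0) :
    HasDerivWithinAt (pker k g) (a / (k + 2)) (Set.Ico (0:ℝ) 1) 0 := by
  rw [hasDerivWithinAt_iff_tendsto_slope]
  rw [Metric.tendsto_nhdsWithin_nhds]
  intro ε hε
  -- quantitative differentiability
  have hd' := hd
  rw [hasDerivWithinAt_iff_tendsto, Metric.tendsto_nhdsWithin_nhds] at hd'
  obtain ⟨δ, hδ, hδ'⟩ := hd' (ε/2) (by positivity)
  refine ⟨δ, hδ, ?_⟩
  rintro x ⟨hx, hx0⟩ hxd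
  simp only [Set.mem_singleton_iff] at hx0
  have hx0' : 0 < x := lt_of_le_of_ne hx.1 (Ne.symm hx0)
  have hxδ : x < δ := by
    rw [Real.dist_eq, sub_zero, abs_of_nonneg hx.1] at hxd; exact hxd
  -- pointwise bound on [0, x]
  have hb : ∀ t ∈ Set.Ioc (0:ℝ) x, |t ^ k * (g t - g 0 - a * t)| ≤ (ε/2) * t ^ (k+1) := by
    intro t ht
    have htI : t ∈ Set.Ico (0:ℝ) 1 := ⟨ht.1.le, lt_of_le_of_lt ht.2 hx.2⟩
    have htd : dist t 0 < δ := by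
      rw [Real.dist_eq, sub_zero, abs_of_nonneg ht.1.le]; exact lt_of_le_of_lt ht.2 hxδ
    have h2 := hδ' htI htd
    rw [Real.dist_eq, sub_zero] at h2
    have h3 : |g t - g 0 - a * t| ≤ (ε/2) * t := by
      have habs : |(t:ℝ)| = t := abs_of_nonneg ht.1.le
      have h4 : ‖t‖⁻¹ * ‖g t - g 0 - (t - 0) • a‖ ≤ ε/2 := by
        have := le_of_lt (by simpa using h2 : |t|⁻¹ * |g t - g 0 - t * a| < ε / 2)
        simpa using this
      rw [Real.norm_eq_abs, Real.norm_eq_abs, habs, sub_zero, smul_eq_mul] at h4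
      have := (inv_mul_le_iff₀ (by exact ht.1)).mp h4
      calc |g t - g 0 - a * t| = |g t - g 0 - t * a| := by ring_nf
        _ ≤ ε/2 * t := by linarith [this]
    calc |t ^ k * (g t - g 0 - a * t)| = t ^ k * |g t - g 0 - a * t| := by
          rw [abs_mul, abs_of_nonneg (pow_nonneg ht.1.le k)]
      _ ≤ t ^ k * ((ε/2) * t) := mul_le_mul_of_nonneg_left h3 (pow_nonneg ht.1.le k)
      _ = (ε/2) * t ^ (k+1) := by ring
  have hint : IntervalIntegrable (fun t => t ^ k * (g t - g 0 - a * t)) volume 0 x :=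
    integrable_aux hg hx k (g 0) a
  have hbd := integral_bound hx0' hint hb
  -- identify the slope
  have hslope : slope (pker k g) 0 x - a / (k+2)
      = (∫ t in (0:ℝ)..x, t ^ k * (g t - g 0 - a * t)) / x ^ (k+2) := by
    have h1 : slope (pker k g) 0 x = (pker k g x - g 0 / (k+1)) / x := by
      rw [slope_def_field, pker_zero]
      field_simp
      ring
    have h2 : (∫ t in (0:ℝ)..x, t ^ k * (g t - g 0 - a * t))
        = (∫ t in (0:ℝ)..x, t ^ k * (g t - g 0)) - a * (x^(k+2)/(k+2)) := by
      have heq : (fun t => t ^ k * (g t - g 0 - a * t))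
          = fun t => t ^ k * (g t - g 0) - a * t ^ (k+1) := by
        funext t; ring
      rw [heq, intervalIntegral.integral_sub (by simpa using integrable_aux hg hx k (g 0) 0)
        ((Continuous.intervalIntegrable (by continuity) 0 x)),
        intervalIntegral.integral_const_mul, integral_pow]
      push_cast
      ring
    rw [h1, pker_sub hg hx hx0' k (g 0), h2]
    have hxk : (x:ℝ) ^ (k+1) ≠ 0 := pow_ne_zero _ hx0'.ne'
    have hxk2 : (x:ℝ) ^ (k+2) ≠ 0 := pow_ne_zero _ hx0'.ne'
    have hk2 : ((k:ℝ) + 2) ≠ 0 := by positivity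
    field_simp
    ring
  rw [Real.dist_eq, hslope, abs_div, abs_of_pos (pow_pos hx0' (k+2))]
  calc |∫ t in (0:ℝ)..x, t ^ k * (g t - g 0 - a * t)| / x ^ (k+2)
      ≤ (ε/2 * x ^ (k+2) / (k+1+1)) / x ^ (k+2) := by
        apply div_le_div_of_nonneg_right ?_ (pow_pos hx0' (k+2)).le
        · exact_mod_cast hbd
      _ = (ε/2) / (k+2) := by
        have hxk2 : (x:ℝ) ^ (k+2) ≠ 0 := pow_ne_zero _ hx0'.ne'
        field_simp
        ring
      _ ≤ ε/2 := by
        apply div_le_self (by positivity)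
        have : (0:ℝ) ≤ (k:ℝ) := Nat.cast_nonneg k
        linarith
      _ < ε := by linarith

end odeAux

namespace odeAux

lemma pker_hasDerivAt {k : ℕ} {g : ℝ → ℝ} (hg : ContinuousOn g (Set.Ico (0:ℝ) 1))
    {x : ℝ} (hx : x ∈ Set.Ioo (0:ℝ) 1) :
    HasDerivAt (pker k g) ((g x - (k+1) * pker k g x) / x) x := by
  have hx0 : (0:ℝ) < x := hx.1
  have hxI : x ∈ Set.Ico (0:ℝ) 1 := ⟨hx0.le, hx.2⟩
  have hcont : ContinuousOn (fun t => t ^ k * g t) (Set.Ioo (0:ℝ) 1) :=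
    ((continuous_pow k).continuousOn).mul (hg.mono Set.Ioo_subset_Ico_self)
  have hW : HasDerivAt (fun y => ∫ t in (0:ℝ)..y, t ^ k * g t) (x ^ k * g x) x :=
    intervalIntegral.integral_hasDerivAt_right (intg hg hxI k)
      (hcont.stronglyMeasurableAtFilter isOpen_Ioo x hx)
      (hcont.continuousAt (isOpen_Ioo.mem_nhds hx))
  have hden : HasDerivAt (fun y : ℝ => y ^ (k+1)) ((k+1) * x ^ k) x := by
    simpa using hasDerivAt_pow (k+1) x
  have hq := hW.div hden (pow_ne_zero (k+1) hx0.ne')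
  have heq : (fun y => (∫ t in (0:ℝ)..y, t ^ k * g t) / y ^ (k+1)) =ᶠ[𝓝 x] pker k g := by
    filter_upwards [eventually_ne_nhds hx0.ne'] with y hy
    rw [pker_pos k g hy]
  have hq' := hq.congr_of_eventuallyEq heq.symm
  refine hq'.congr_deriv ?_
  rw [pker_pos k g hx0.ne']
  have hxk : (x:ℝ) ^ (k+1) ≠ 0 := pow_ne_zero _ hx0.ne'
  field_simp
  ring

lemma ibp_ident {g : ℝ → ℝ} (hg : ContDiffOn ℝ 1 g (Set.Ico (0:ℝ) 1))
    {x : ℝ} (hx : x ∈ Set.Ioo (0:ℝ) 1) (k : ℕ) :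
    ∫ t in (0:ℝ)..x, t ^ (k+1) * derivWithin g (Set.Ico (0:ℝ) 1) t
      = x ^ (k+1) * g x - (k+1) * ∫ t in (0:ℝ)..x, t ^ k * g t := by
  have hx0 : (0:ℝ) < x := hx.1
  have hxI : x ∈ Set.Ico (0:ℝ) 1 := ⟨hx0.le, hx.2⟩
  have hgc : ContinuousOn g (Set.Ico (0:ℝ) 1) := hg.continuousOn
  have hg' : ContinuousOn (derivWithin g (Set.Ico (0:ℝ) 1)) (Set.Ico (0:ℝ) 1) :=
    hg.continuousOn_derivWithin (uniqueDiffOn_Ico 0 1) le_rfl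
  set G := derivWithin g (Set.Ico (0:ℝ) 1) with hG
  have hint1 : IntervalIntegrable (fun t => t ^ (k+1) * G t) volume 0 x := by
    apply ContinuousOn.intervalIntegrable
    rw [Set.uIcc_of_le hx0.le]
    exact ((continuous_pow (k+1)).continuousOn).mul (hg'.mono (Icc_sub hxI))
  have hint2 : IntervalIntegrable (fun t => ((k:ℝ)+1) * (t ^ k * g t)) volume 0 x :=
    (intg hgc hxI k).const_mul _
  have hftc : ∫ t in (0:ℝ)..x, (((k:ℝ)+1) * (t ^ k * g t) + t ^ (k+1) * G t)
      = x ^ (k+1) * g x - 0 ^ (k+1) * g 0 := by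
    apply intervalIntegral.integral_eq_sub_of_hasDeriv_right_of_le hx0.le
    · exact ((continuous_pow (k+1)).continuousOn).mul (hgc.mono (Icc_sub hxI))
    · intro t ht
      have htI : t ∈ Set.Ioo (0:ℝ) 1 := ⟨ht.1, lt_trans ht.2 hx.2⟩
      have hmem : Set.Ico (0:ℝ) 1 ∈ 𝓝 t := Ico_mem_nhds htI.1 htI.2
      have hdiff : DifferentiableAt ℝ g t :=
        (hg.contDiffAt hmem).differentiableAt one_ne_zero
      have hder : G t = deriv g t := by rw [hG, derivWithin_of_mem_nhds hmem]
      have hprod : HasDerivAt (fun y => y ^ (k+1) * g y)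
          (((k+1) * t ^ k) * g t + t ^ (k+1) * deriv g t) t := by
        exact ((hasDerivAt_pow (k+1) t).mul hdiff.hasDerivAt).congr_deriv (by simp)
      rw [hder]
      have : (((k:ℝ)+1) * (t ^ k * g t) + t ^ (k+1) * deriv g t)
          = (((k:ℝ)+1) * t ^ k) * g t + t ^ (k+1) * deriv g t := by ring
      rw [this]
      exact hprod.hasDerivWithinAt
    · exact hint2.add hint1
  rw [intervalIntegral.integral_add hint2 hint1, intervalIntegral.integral_const_mul] at hftc
  have h0 : (0:ℝ) ^ (k+1) * g 0 = 0 := by simp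
  rw [h0] at hftc
  linarith [hftc]

lemma pker_hasDerivAt' {k : ℕ} {g : ℝ → ℝ} (hg : ContDiffOn ℝ 1 g (Set.Ico (0:ℝ) 1))
    {x : ℝ} (hx : x ∈ Set.Ioo (0:ℝ) 1) :
    HasDerivAt (pker k g) (pker (k+1) (derivWithin g (Set.Ico (0:ℝ) 1)) x) x := by
  have hx0 : (0:ℝ) < x := hx.1
  have h1 := pker_hasDerivAt hg.continuousOn hx (k := k)
  convert h1 using 1
  rw [pker_pos (k+1) _ hx0.ne', ibp_ident hg hx k, pker_pos k g hx0.ne']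
  have hxk1 : (x:ℝ) ^ (k+1) ≠ 0 := pow_ne_zero _ hx0.ne'
  have hxk2 : (x:ℝ) ^ (k+1+1) ≠ 0 := pow_ne_zero _ hx0.ne'
  push_cast
  field_simp
  ring

end odeAux

namespace odeAux

lemma pker_continuousOn {k : ℕ} {g : ℝ → ℝ} (hg : ContinuousOn g (Set.Ico (0:ℝ) 1)) :
    ContinuousOn (pker k g) (Set.Ico (0:ℝ) 1) := by
  intro x hx
  rcases eq_or_ne x 0 with rfl | hx0
  · exact pker_tendsto_zero hg
  · have hxI : x ∈ Set.Ioo (0:ℝ) 1 := ⟨lt_of_le_of_ne hx.1 (Ne.symm hx0), hx.2⟩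
    exact ((pker_hasDerivAt hg hxI).continuousAt).continuousWithinAt

lemma pker_contDiffOn : ∀ (n k : ℕ) (g : ℝ → ℝ),
    ContDiffOn ℝ n g (Set.Ico (0:ℝ) 1) → ContDiffOn ℝ n (pker k g) (Set.Ico (0:ℝ) 1) := by
  intro n
  induction n with
  | zero =>
    intro k g hg
    rw [CharP.cast_eq_zero, contDiffOn_zero] at *
    exact pker_continuousOn hg
  | succ n ih =>
    intro k g hg
    have hU : UniqueDiffOn ℝ (Set.Ico (0:ℝ) 1) := uniqueDiffOn_Ico 0 1
    have hcast : ((n+1 : ℕ) : WithTop ℕ∞) = (n : WithTop ℕ∞) + 1 := by push_cast; rfl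
    rw [hcast] at hg ⊢
    have hg1 : ContDiffOn ℝ 1 g (Set.Ico (0:ℝ) 1) := hg.of_le le_add_self
    have hgc : ContinuousOn g (Set.Ico (0:ℝ) 1) := hg.continuousOn
    set G := derivWithin g (Set.Ico (0:ℝ) 1) with hG
    have hg' : ContDiffOn ℝ n G (Set.Ico (0:ℝ) 1) :=
      ((contDiffOn_succ_iff_derivWithin hU).mp hg).2.2
    have hdiff : DifferentiableOn ℝ (pker k g) (Set.Ico (0:ℝ) 1) := by
      intro x hx
      rcases eq_or_ne x 0 with rfl | hx0
      · have hd0 : HasDerivWithinAt g (G 0) (Set.Ico (0:ℝ) 1) 0 :=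
          ((hg1.differentiableOn one_ne_zero) 0 ⟨le_rfl, one_pos⟩).hasDerivWithinAt
        exact (pker_hasDerivWithinAt_zero hgc hd0).differentiableWithinAt
      · have hxI : x ∈ Set.Ioo (0:ℝ) 1 := ⟨lt_of_le_of_ne hx.1 (Ne.symm hx0), hx.2⟩
        exact (pker_hasDerivAt hgc hxI).differentiableAt.differentiableWithinAt
    have heq : Set.EqOn (derivWithin (pker k g) (Set.Ico (0:ℝ) 1)) (pker (k+1) G)
        (Set.Ico (0:ℝ) 1) := by
      intro x hx
      rcases eq_or_ne x 0 with rfl | hx0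
      · have hd0 : HasDerivWithinAt g (G 0) (Set.Ico (0:ℝ) 1) 0 :=
          ((hg1.differentiableOn one_ne_zero) 0 ⟨le_rfl, one_pos⟩).hasDerivWithinAt
        have := (pker_hasDerivWithinAt_zero (k := k) hgc hd0).derivWithin (hU 0 ⟨le_rfl, one_pos⟩)
        rw [this, pker_zero]
        push_cast
        ring_nf
      · have hxI : x ∈ Set.Ioo (0:ℝ) 1 := ⟨lt_of_le_of_ne hx.1 (Ne.symm hx0), hx.2⟩
        rw [derivWithin_of_mem_nhds (Ico_mem_nhds hxI.1 hxI.2)]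
        exact (pker_hasDerivAt' hg1 hxI).deriv
    rw [contDiffOn_succ_iff_derivWithin hU]
    refine ⟨hdiff, ?_, ?_⟩
    · intro hω; exact absurd hω (by simp)
    · exact (ih (k+1) G hg').congr heq

end odeAux

namespace odeAux

lemma repr_lemma {u h : ℝ → ℝ}
    (hu1 : ContDiffOn ℝ 1 u (Set.Ioo (0:ℝ) 1))
    (hu0 : ContinuousOn u (Set.Ico (0:ℝ) 1))
    (hhc : ContinuousOn h (Set.Ico (0:ℝ) 1))
    (hode : ∀ x ∈ Set.Ioo (0:ℝ) 1, deriv (fun y => y * u y) x = x * h x) :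
    ∀ x ∈ Set.Ico (0:ℝ) 1, u x = x * pker 1 h x := by
  have key : ∀ x ∈ Set.Ioo (0:ℝ) 1, x * u x = ∫ t in (0:ℝ)..x, t ^ 1 * h t := by
    intro x hx
    have hxI : x ∈ Set.Ico (0:ℝ) 1 := ⟨hx.1.le, hx.2⟩
    have hstep : ∀ y ∈ Set.Ioo (0:ℝ) x,
        x * u x - y * u y
          = (∫ t in (0:ℝ)..x, t ^ 1 * h t) - ∫ t in (0:ℝ)..y, t ^ 1 * h t := by
      intro y hy
      have hyI : y ∈ Set.Ico (0:ℝ) 1 := ⟨hy.1.le, lt_trans hy.2 hx.2⟩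
      have hsub : Set.uIcc y x ⊆ Set.Ioo (0:ℝ) 1 := by
        rw [Set.uIcc_of_le hy.2.le]
        exact fun t ht => ⟨lt_of_lt_of_le hy.1 ht.1, lt_of_le_of_lt ht.2 hx.2⟩
      have hFTC : ∫ t in y..x, t ^ 1 * h t = x * u x - y * u y := by
        apply intervalIntegral.integral_eq_sub_of_hasDerivAt
        · intro t ht
          have htI : t ∈ Set.Ioo (0:ℝ) 1 := hsub ht
          have hdiff : DifferentiableAt ℝ u t :=
            (hu1.contDiffAt (isOpen_Ioo.mem_nhds htI)).differentiableAt one_ne_zero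
          have hF : DifferentiableAt ℝ (fun y => y * u y) t := differentiableAt_id.mul hdiff
          have := hF.hasDerivAt
          rw [hode t htI] at this
          simpa using this
        · apply ContinuousOn.intervalIntegrable
          exact ((continuous_pow 1).continuousOn).mul
            ((hhc.mono (fun z hz => ⟨(hsub hz).1.le, (hsub hz).2⟩)))
      have hsplit : (∫ t in (0:ℝ)..x, t ^ 1 * h t) - (∫ t in (0:ℝ)..y, t ^ 1 * h t)
          = ∫ t in y..x, t ^ 1 * h t :=
        intervalIntegral.integral_interval_sub_left (intg hhc hxI 1) (intg hhc hyI 1)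
      rw [hsplit, hFTC]
    have hne : (𝓝[Set.Ioo (0:ℝ) x] 0).NeBot := by
      apply mem_closure_iff_nhdsWithin_neBot.mp
      rw [closure_Ioo hx.1.ne]
      exact ⟨le_rfl, hx.1.le⟩
    have hsub' : Set.Ioo (0:ℝ) x ⊆ Set.Ico (0:ℝ) 1 :=
      fun t ht => ⟨ht.1.le, lt_trans ht.2 hx.2⟩
    have hid : Tendsto (fun y : ℝ => y) (𝓝[Set.Ioo (0:ℝ) x] 0) (𝓝 0) :=
      Filter.tendsto_id.mono_right nhdsWithin_le_nhds
    have t1 : Tendsto (fun y => y * u y) (𝓝[Set.Ioo (0:ℝ) x] 0) (𝓝 0) := by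
      have hu : Tendsto u (𝓝[Set.Ioo (0:ℝ) x] 0) (𝓝 (u 0)) :=
        (hu0 0 ⟨le_rfl, one_pos⟩).tendsto.mono_left (nhdsWithin_mono 0 hsub')
      simpa using hid.mul hu
    have t2 : Tendsto (fun y => ∫ t in (0:ℝ)..y, t ^ 1 * h t)
        (𝓝[Set.Ioo (0:ℝ) x] 0) (𝓝 0) := by
      have hp : Tendsto (pker 1 h) (𝓝[Set.Ioo (0:ℝ) x] 0) (𝓝 (pker 1 h 0)) :=
        (pker_tendsto_zero hhc).mono_left (nhdsWithin_mono 0 hsub')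
      have hsq : Tendsto (fun y : ℝ => y ^ 2) (𝓝[Set.Ioo (0:ℝ) x] 0) (𝓝 0) := by
        simpa using hid.pow 2
      have hmul := hsq.mul hp
      rw [zero_mul] at hmul
      apply hmul.congr'
      filter_upwards [self_mem_nhdsWithin] with y hy
      rw [pker_pos 1 h hy.1.ne', mul_comm, div_mul_cancel₀ _ (pow_ne_zero (1+1) hy.1.ne')]
    have t3 : Tendsto (fun y => x * u x - y * u y + ∫ t in (0:ℝ)..y, t ^ 1 * h t)
        (𝓝[Set.Ioo (0:ℝ) x] 0) (𝓝 (x * u x)) := by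
      simpa using (tendsto_const_nhds.sub t1).add t2
    have t4 : Tendsto (fun y => x * u x - y * u y + ∫ t in (0:ℝ)..y, t ^ 1 * h t)
        (𝓝[Set.Ioo (0:ℝ) x] 0) (𝓝 (∫ t in (0:ℝ)..x, t ^ 1 * h t)) := by
      apply Filter.Tendsto.congr' _ tendsto_const_nhds
      filter_upwards [self_mem_nhdsWithin] with y hy
      have := hstep y hy
      linarith
    exact tendsto_nhds_unique t3 t4
  -- u 0 = 0
  have u0 : u 0 = 0 := by
    have hne : (𝓝[Set.Ioo (0:ℝ) 1] 0).NeBot := by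
      apply mem_closure_iff_nhdsWithin_neBot.mp
      rw [closure_Ioo one_ne_zero.symm]
      exact ⟨le_rfl, zero_le_one⟩
    have hid : Tendsto (fun y : ℝ => y) (𝓝[Set.Ioo (0:ℝ) 1] 0) (𝓝 0) :=
      Filter.tendsto_id.mono_right nhdsWithin_le_nhds
    have hu : Tendsto u (𝓝[Set.Ioo (0:ℝ) 1] 0) (𝓝 (u 0)) :=
      (hu0 0 ⟨le_rfl, one_pos⟩).tendsto.mono_left
        (nhdsWithin_mono 0 Set.Ioo_subset_Ico_self)
    have hp : Tendsto (pker 1 h) (𝓝[Set.Ioo (0:ℝ) 1] 0) (𝓝 (pker 1 h 0)) :=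
      (pker_tendsto_zero hhc).mono_left (nhdsWithin_mono 0 Set.Ioo_subset_Ico_self)
    have h2 : Tendsto u (𝓝[Set.Ioo (0:ℝ) 1] 0) (𝓝 0) := by
      have hmul := hid.mul hp
      rw [zero_mul] at hmul
      apply hmul.congr'
      filter_upwards [self_mem_nhdsWithin] with y hy
      have hk := key y hy
      have hy0 : y ≠ 0 := hy.1.ne'
      rw [pker_pos 1 h hy0, ← hk]
      field_simp
      ring
    exact tendsto_nhds_unique hu h2
  intro x hx
  rcases eq_or_ne x 0 with rfl | hx0
  · simp [u0]
  · have hxI : x ∈ Set.Ioo (0:ℝ) 1 := ⟨lt_of_le_of_ne hx.1 (Ne.symm hx0), hx.2⟩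
    have hk := key x hxI
    rw [pker_pos 1 h hx0, ← hk]
    field_simp

end odeAux


end odeAuxSection

/-- **ODE regularity at a degenerate endpoint.** If `u ∈ C¹((0,1)) ∩ C⁰([0,1))`,
`h ∈ Cⁿ([0,1))` and `(x·u(x))' = x·h(x)` on `(0,1)`, then `u` is of class
`C^{n+1}([0,1))`. -/
theorem ode_regularity_at_degenerate_endpoint (n : ℕ) (u h : ℝ → ℝ)
    (hu1 : ContDiffOn ℝ 1 u (Set.Ioo (0:ℝ) 1))
    (hu0 : ContinuousOn u (Set.Ico (0:ℝ) 1))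
    (hh : ContDiffOn ℝ n h (Set.Ico (0:ℝ) 1))
    (hode : ∀ x ∈ Set.Ioo (0:ℝ) 1, deriv (fun y => y * u y) x = x * h x) :
    ContDiffOn ℝ (n + 1) u (Set.Ico (0:ℝ) 1) := by
  classical
  have hhc : ContinuousOn h (Set.Ico (0:ℝ) 1) := hh.continuousOn
  have hrep := odeAux.repr_lemma hu1 hu0 hhc hode
  have hU : UniqueDiffOn ℝ (Set.Ico (0:ℝ) 1) := uniqueDiffOn_Ico 0 1
  have hd0 : HasDerivWithinAt u (pker 1 h 0) (Set.Ico (0:ℝ) 1) 0 := by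
    rw [hasDerivWithinAt_iff_tendsto_slope]
    have hpt : Filter.Tendsto (pker 1 h)
        (nhdsWithin 0 (Set.Ico (0:ℝ) 1 \ {0})) (nhds (pker 1 h 0)) :=
      (odeAux.pker_tendsto_zero hhc).mono_left (nhdsWithin_mono 0 Set.diff_subset)
    apply hpt.congr'
    filter_upwards [self_mem_nhdsWithin] with y hy
    have hy0 : y ≠ 0 := hy.2
    rw [slope_def_field, hrep y hy.1, hrep 0 ⟨le_rfl, one_pos⟩]
    rw [zero_mul, sub_zero, sub_zero, mul_comm, mul_div_assoc, div_self hy0, mul_one]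
  have hdx : ∀ x ∈ Set.Ioo (0:ℝ) 1, HasDerivAt u (h x - pker 1 h x) x := by
    intro x hx
    have hdiff : DifferentiableAt ℝ u x :=
      (hu1.contDiffAt (isOpen_Ioo.mem_nhds hx)).differentiableAt one_ne_zero
    have hF : HasDerivAt (fun y => y * u y) (1 * u x + x * deriv u x) x :=
      (hasDerivAt_id x).mul hdiff.hasDerivAt
    have hFd := hF.deriv
    have hode' := hode x hx
    rw [hFd] at hode'
    have hux : u x = x * pker 1 h x := hrep x ⟨hx.1.le, hx.2⟩
    have hx0 : x ≠ 0 := hx.1.ne'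
    have hval : deriv u x = h x - pker 1 h x := by
      apply mul_left_cancel₀ hx0
      rw [mul_sub]
      linarith [hode', hux]
    rw [← hval]
    exact hdiff.hasDerivAt
  have hdiffOn : DifferentiableOn ℝ u (Set.Ico (0:ℝ) 1) := by
    intro x hx
    rcases eq_or_ne x 0 with rfl | hx0
    · exact hd0.differentiableWithinAt
    · exact ((hdx x ⟨lt_of_le_of_ne hx.1 (Ne.symm hx0),
        hx.2⟩).differentiableAt).differentiableWithinAt
  have heqd : Set.EqOn (derivWithin u (Set.Ico (0:ℝ) 1)) (fun x => h x - pker 1 h x)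
      (Set.Ico (0:ℝ) 1) := by
    intro x hx
    rcases eq_or_ne x 0 with rfl | hx0
    · rw [hd0.derivWithin (hU 0 hx)]
      show pker 1 h 0 = h 0 - pker 1 h 0
      rw [odeAux.pker_zero]
      push_cast
      ring
    · have hxI : x ∈ Set.Ioo (0:ℝ) 1 := ⟨lt_of_le_of_ne hx.1 (Ne.symm hx0), hx.2⟩
      rw [derivWithin_of_mem_nhds (Ico_mem_nhds hxI.1 hxI.2)]
      exact (hdx x hxI).deriv
  rw [contDiffOn_succ_iff_derivWithin hU]
  refine ⟨hdiffOn, fun hω => absurd hω (by simp), ?_⟩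
  exact (hh.sub (odeAux.pker_contDiffOn n 1 h hh)).congr heqd
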